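/- Let F̂(z) = Mz + G(z) be a lift of a torus map satisfying the expanding-block assumption, with ‖A⁻¹‖ ≤ 1/K for some constant K > 1, and let Φ̂(z) = lim_{n→∞} A^{−n} P(F̂^n(z)). Let ‖G‖₀ := sup_{z∈ℝ^d} ‖G(z)‖. Then for every z₁, z₂ ∈ ℝ^d, | ‖Φ̂(z₁) − Φ̂(z₂)‖ − ‖P z₁ − P z₂‖ | ≤ 2‖G‖₀ / (K − 1). -/

import Mathlib

open Filter Topology

noncomputable section

/-- Reinterpret a vector `Fin d → ℝ` as a point of Euclidean space `ℝ^d`. -/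
def toEuc (d : ℕ) (v : Fin d → ℝ) : EuclideanSpace ℝ (Fin d) := WithLp.toLp 2 v

/-- Projection onto the first `k` coordinates of `ℝ^d`. -/
def projP (d k : ℕ) (h : k ≤ d) (z : EuclideanSpace ℝ (Fin d)) :
    EuclideanSpace ℝ (Fin k) :=
  WithLp.toLp 2 (fun i => z (Fin.castLE h i))

lemma projP_add (d k : ℕ) (h : k ≤ d) (x y : EuclideanSpace ℝ (Fin d)) :
    projP d k h (x + y) = projP d k h x + projP d k h y := by
  ext i; simp [projP]

lemma norm_projP_le (d k : ℕ) (h : k ≤ d) (z : EuclideanSpace ℝ (Fin d)) :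
    ‖projP d k h z‖ ≤ ‖z‖ := by
  rw [EuclideanSpace.norm_eq, EuclideanSpace.norm_eq]
  apply Real.sqrt_le_sqrt
  have : ∑ i : Fin k, ‖projP d k h z i‖ ^ 2
      = ∑ j ∈ Finset.univ.image (Fin.castLE h), ‖z j‖ ^ 2 := by
    rw [Finset.sum_image (fun a _ b _ hab => Fin.castLE_injective h hab)]
    rfl
  rw [this]
  exact Finset.sum_le_sum_of_subset_of_nonneg (Finset.subset_univ _)
    (fun j _ _ => by positivity)


/--
Let `F̂(z) = Mz + G(z)` be a lift of a torus map satisfying the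
expanding-block assumption, with `‖A⁻¹‖ ≤ 1/K` for some constant `K > 1`, and let
`Φ̂(z) = lim_{n→∞} A⁻ⁿ P(F̂ⁿ(z))`. Let `‖G‖₀ := sup_{z} ‖G(z)‖`. Then for every `z₁, z₂ ∈ ℝ^d`,
`|‖Φ̂(z₁) − Φ̂(z₂)‖ − ‖P z₁ − P z₂‖| ≤ 2‖G‖₀ / (K − 1)`.
-/
theorem stmt4 (d k : ℕ) (hk : 1 ≤ k) (hkd : k ≤ d)
    (M : Matrix (Fin d) (Fin d) ℝ) (hMint : ∀ i j, ∃ n : ℤ, M i j = (n : ℝ))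
    (G : EuclideanSpace ℝ (Fin d) → EuclideanSpace ℝ (Fin d))
    (hGcont : Continuous G) (hGbdd : ∃ C, ∀ z, ‖G z‖ ≤ C)
    (hGper : ∀ (z : EuclideanSpace ℝ (Fin d)) (p : Fin d → ℤ),
      G (z + toEuc d fun i => (p i : ℝ)) = G z)
    (F : EuclideanSpace ℝ (Fin d) → EuclideanSpace ℝ (Fin d))
    (hF : ∀ z, F z = toEuc d (M.mulVec z) + G z)
    (A : EuclideanSpace ℝ (Fin k) ≃L[ℝ] EuclideanSpace ℝ (Fin k))
    (hPM : ∀ z : EuclideanSpace ℝ (Fin d),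
      projP d k hkd (toEuc d (M.mulVec z)) = A (projP d k hkd z))
    (hA : ‖(A.symm : EuclideanSpace ℝ (Fin k) →L[ℝ] EuclideanSpace ℝ (Fin k))‖ < 1)
    (K : ℝ) (hK : 1 < K)
    (hAK : ‖(A.symm : EuclideanSpace ℝ (Fin k) →L[ℝ] EuclideanSpace ℝ (Fin k))‖ ≤ 1 / K)
    (Φ : EuclideanSpace ℝ (Fin d) → EuclideanSpace ℝ (Fin k))
    (hΦ : ∀ z, Tendsto (fun n : ℕ => (A.symm ^ n) (projP d k hkd (F^[n] z)))
      atTop (𝓝 (Φ z))) :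
    ∀ z₁ z₂ : EuclideanSpace ℝ (Fin d),
      |‖Φ z₁ - Φ z₂‖ - ‖projP d k hkd z₁ - projP d k hkd z₂‖| ≤
        2 * (⨆ w : EuclideanSpace ℝ (Fin d), ‖G w‖) / (K - 1) := by

  intro z₁ z₂
  set C : ℝ := ⨆ w : EuclideanSpace ℝ (Fin d), ‖G w‖ with hCdef
  obtain ⟨C₀, hC₀⟩ := hGbdd
  have hbdd : BddAbove (Set.range fun w : EuclideanSpace ℝ (Fin d) => ‖G w‖) :=
    ⟨C₀, by rintro _ ⟨w, rfl⟩; exact hC₀ w⟩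
  have hGC : ∀ z, ‖G z‖ ≤ C := fun z => le_ciSup hbdd z
  have hCnn : 0 ≤ C := le_trans (norm_nonneg _) (hGC 0)
  have hKpos : (0:ℝ) < K := lt_trans one_pos hK
  have hr0 : (0:ℝ) ≤ 1 / K := by positivity
  have hr1 : (1:ℝ) / K < 1 := by
    rw [div_lt_one hKpos]; exact hK
  -- norm of powers of A.symm
  have hpow : ∀ (n : ℕ) (v : EuclideanSpace ℝ (Fin k)),
      ‖(A.symm ^ n) v‖ ≤ (1 / K) ^ n * ‖v‖ := by
    intro n
    induction n with
    | zero =>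
        intro v
        have h0 : (A.symm ^ 0) v = v := rfl
        rw [h0, pow_zero, one_mul]
    | succ n ih =>
        intro v
        have h1 : (A.symm ^ (n + 1)) v = (A.symm ^ n) (A.symm v) := by
          rw [pow_succ]; rfl
        rw [h1]
        calc ‖(A.symm ^ n) (A.symm v)‖ ≤ (1 / K) ^ n * ‖A.symm v‖ := ih _
          _ ≤ (1 / K) ^ n * ((1 / K) * ‖v‖) := by
              apply mul_le_mul_of_nonneg_left _ (by positivity)
              calc ‖A.symm v‖ ≤ ‖(A.symm : EuclideanSpace ℝ (Fin k) →L[ℝ] EuclideanSpace ℝ (Fin k))‖ * ‖v‖ :=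
                    (A.symm : EuclideanSpace ℝ (Fin k) →L[ℝ] EuclideanSpace ℝ (Fin k)).le_opNorm v
                _ ≤ (1 / K) * ‖v‖ := mul_le_mul_of_nonneg_right hAK (norm_nonneg _)
          _ = (1 / K) ^ (n + 1) * ‖v‖ := by ring
  -- telescoping step
  have hstep : ∀ (z : EuclideanSpace ℝ (Fin d)) (n : ℕ),
      (A.symm ^ (n + 1)) (projP d k hkd (F^[n + 1] z))
        = (A.symm ^ n) (projP d k hkd (F^[n] z))
          + (A.symm ^ (n + 1)) (projP d k hkd (G (F^[n] z))) := by
    intro z n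
    rw [Function.iterate_succ_apply', hF, projP_add, map_add]
    congr 1
    rw [hPM]
    have : (A.symm ^ (n + 1)) (A (projP d k hkd (F^[n] z)))
        = (A.symm ^ n) (A.symm (A (projP d k hkd (F^[n] z)))) := by
      rw [pow_succ]; rfl
    rw [this, A.symm_apply_apply]
  -- bound on partial orbits
  have hbound : ∀ (z : EuclideanSpace ℝ (Fin d)) (n : ℕ),
      ‖(A.symm ^ n) (projP d k hkd (F^[n] z)) - projP d k hkd z‖
        ≤ ∑ m ∈ Finset.range n, (1 / K) ^ (m + 1) * C := by
    intro z n
    induction n with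
    | zero =>
        have h0 : (A.symm ^ 0) (projP d k hkd (F^[0] z)) = projP d k hkd z := rfl
        rw [h0]; simp
    | succ n ih =>
        rw [hstep z n, Finset.sum_range_succ]
        have h2 : ‖(A.symm ^ (n + 1)) (projP d k hkd (G (F^[n] z)))‖
            ≤ (1 / K) ^ (n + 1) * C := by
          calc ‖(A.symm ^ (n + 1)) (projP d k hkd (G (F^[n] z)))‖
              ≤ (1 / K) ^ (n + 1) * ‖projP d k hkd (G (F^[n] z))‖ := hpow _ _
            _ ≤ (1 / K) ^ (n + 1) * C := by
                apply mul_le_mul_of_nonneg_left _ (by positivity)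
                exact le_trans (norm_projP_le _ _ _ _) (hGC _)
        calc ‖(A.symm ^ n) (projP d k hkd (F^[n] z))
              + (A.symm ^ (n + 1)) (projP d k hkd (G (F^[n] z))) - projP d k hkd z‖
            = ‖((A.symm ^ n) (projP d k hkd (F^[n] z)) - projP d k hkd z)
              + (A.symm ^ (n + 1)) (projP d k hkd (G (F^[n] z)))‖ := by
              congr 1; abel
          _ ≤ ‖(A.symm ^ n) (projP d k hkd (F^[n] z)) - projP d k hkd z‖
              + ‖(A.symm ^ (n + 1)) (projP d k hkd (G (F^[n] z)))‖ := norm_add_le _ _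
          _ ≤ (∑ m ∈ Finset.range n, (1 / K) ^ (m + 1) * C) + (1 / K) ^ (n + 1) * C :=
              add_le_add ih h2
  -- geometric bound
  have hgeom : ∀ n : ℕ, ∑ m ∈ Finset.range n, (1 / K) ^ (m + 1) * C ≤ C / (K - 1) := by
    intro n
    have hsum : ∑ m ∈ Finset.range n, (1 / K) ^ m ≤ (1 - 1 / K)⁻¹ := by
      have := Summable.sum_le_tsum (Finset.range n)
        (fun i _ => pow_nonneg hr0 i) (summable_geometric_of_lt_one hr0 hr1)
      rwa [tsum_geometric_of_lt_one hr0 hr1] at this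
    have heq : ∑ m ∈ Finset.range n, (1 / K) ^ (m + 1) * C
        = (1 / K * C) * ∑ m ∈ Finset.range n, (1 / K) ^ m := by
      rw [Finset.mul_sum]
      apply Finset.sum_congr rfl
      intro m _; ring
    rw [heq]
    have h3 : (1 / K * C) * ∑ m ∈ Finset.range n, (1 / K) ^ m
        ≤ (1 / K * C) * (1 - 1 / K)⁻¹ :=
      mul_le_mul_of_nonneg_left hsum (by positivity)
    refine le_trans h3 (le_of_eq ?_)
    have hK1 : K - 1 ≠ 0 := ne_of_gt (by linarith)
    have hKne : K ≠ 0 := ne_of_gt hKpos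
    field_simp
  -- distance from Φ to projP
  have hΦdist : ∀ z, ‖Φ z - projP d k hkd z‖ ≤ C / (K - 1) := by
    intro z
    have ht : Tendsto (fun n : ℕ =>
        ‖(A.symm ^ n) (projP d k hkd (F^[n] z)) - projP d k hkd z‖) atTop
        (𝓝 ‖Φ z - projP d k hkd z‖) :=
      ((hΦ z).sub tendsto_const_nhds).norm
    exact le_of_tendsto ht (Eventually.of_forall fun n =>
      le_trans (hbound z n) (hgeom n))
  have hfinal :
      |‖Φ z₁ - Φ z₂‖ - ‖projP d k hkd z₁ - projP d k hkd z₂‖|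
        ≤ ‖(Φ z₁ - Φ z₂) - (projP d k hkd z₁ - projP d k hkd z₂)‖ :=
    abs_norm_sub_norm_le _ _
  calc |‖Φ z₁ - Φ z₂‖ - ‖projP d k hkd z₁ - projP d k hkd z₂‖|
      ≤ ‖(Φ z₁ - Φ z₂) - (projP d k hkd z₁ - projP d k hkd z₂)‖ := hfinal
    _ = ‖(Φ z₁ - projP d k hkd z₁) - (Φ z₂ - projP d k hkd z₂)‖ := by congr 1; abel
    _ ≤ ‖Φ z₁ - projP d k hkd z₁‖ + ‖Φ z₂ - projP d k hkd z₂‖ := norm_sub_le _ _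
    _ ≤ C / (K - 1) + C / (K - 1) := add_le_add (hΦdist z₁) (hΦdist z₂)
    _ = 2 * C / (K - 1) := by ring
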